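/- Untangling: let E be a comparator network on n channels and F a generalized comparator network on n channels such that the concatenation E;F is a generalized sorting network. Then there exists a (standard) comparator network F' on n channels with the same depth as F such that E;F' is a sorting network. -/

import Mathlib

namespace SN

open scoped Classical

/-- A comparator on `n` channels: a pair of channels. -/
abbrev Comp (n : ℕ) := Fin n × Fin n

/-- A layer is a finite set of comparators. -/
abbrev Layer (n : ℕ) := Finset (Comp n)

/-- A comparator network is a sequence (list) of layers; its depth is the length. -/
abbrev Net (n : ℕ) := List (Layer n)

/-- Each channel is used by at most one comparator of the layer. -/
def NoOverlap {n : ℕ} (L : Layer n) : Prop :=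
  ∀ c ∈ L, ∀ c' ∈ L, c ≠ c' →
    c.1 ≠ c'.1 ∧ c.1 ≠ c'.2 ∧ c.2 ≠ c'.1 ∧ c.2 ≠ c'.2

/-- A (standard) layer: comparators `(i,j)` with `i < j`, channels pairwise disjoint. -/
def IsLayer {n : ℕ} (L : Layer n) : Prop :=
  (∀ c ∈ L, c.1 < c.2) ∧ NoOverlap L

/-- A generalized layer: comparators `(i,j)` with `i ≠ j` allowed in any order. -/
def IsGenLayer {n : ℕ} (L : Layer n) : Prop :=
  (∀ c ∈ L, c.1 ≠ c.2) ∧ NoOverlap L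

def IsNet {n : ℕ} (C : Net n) : Prop := ∀ L ∈ C, IsLayer L

def IsGenNet {n : ℕ} (C : Net n) : Prop := ∀ L ∈ C, IsGenLayer L

/-- Apply one layer to a Boolean vector: a comparator `(i,j)` puts the min
(`&&`) on channel `i` and the max (`||`) on channel `j`. -/
noncomputable def applyLayer {n : ℕ} (L : Layer n) (x : Fin n → Bool) : Fin n → Bool :=
  fun k =>
    if h1 : ∃ c ∈ L, c.1 = k then x h1.choose.1 && x h1.choose.2
    else if h2 : ∃ c ∈ L, c.2 = k then x h2.choose.1 || x h2.choose.2
    else x k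

/-- Run a comparator network on a Boolean input (layers applied in sequence). -/
noncomputable def run {n : ℕ} (C : Net n) (x : Fin n → Bool) : Fin n → Bool :=
  C.foldl (fun y L => applyLayer L y) x

/-- Ascendingly sorted Boolean vector. -/
def BSorted {n : ℕ} (x : Fin n → Bool) : Prop :=
  ∀ i j : Fin n, i ≤ j → x i ≤ x j

/-- A sorting network: a comparator network sorting every Boolean input. -/
def IsSortingNet {n : ℕ} (C : Net n) : Prop :=
  IsNet C ∧ ∀ x : Fin n → Bool, BSorted (run C x)

/-- The set of outputs of a network on all Boolean inputs. -/
def outputs {n : ℕ} (C : Net n) : Set (Fin n → Bool) := Set.range (run C)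

/-- Apply one layer to a vector of naturals. -/
noncomputable def applyLayerN {n : ℕ} (L : Layer n) (x : Fin n → ℕ) : Fin n → ℕ :=
  fun k =>
    if h1 : ∃ c ∈ L, c.1 = k then min (x h1.choose.1) (x h1.choose.2)
    else if h2 : ∃ c ∈ L, c.2 = k then max (x h2.choose.1) (x h2.choose.2)
    else x k

noncomputable def runN {n : ℕ} (C : Net n) (x : Fin n → ℕ) : Fin n → ℕ :=
  C.foldl (fun y L => applyLayerN L y) x

def NSorted {n : ℕ} (x : Fin n → ℕ) : Prop :=
  ∀ i j : Fin n, i ≤ j → x i ≤ x j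

/-- Permute the coordinates of a Boolean vector by `π` (channel `k`'s value
moves to channel `π k`). -/
def permVec {n : ℕ} (π : Equiv.Perm (Fin n)) (x : Fin n → Bool) : Fin n → Bool :=
  fun i => x (π.symm i)

/-- The image of a set of Boolean vectors under coordinate permutation by `π`. -/
def permSet {n : ℕ} (π : Equiv.Perm (Fin n)) (X : Set (Fin n → Bool)) :
    Set (Fin n → Bool) :=
  permVec π '' X

/-- The image `π(L)` of a layer under a permutation of channels. -/
def permLayer {n : ℕ} (π : Equiv.Perm (Fin n)) (L : Layer n) : Layer n :=
  L.image fun c => (π c.1, π c.2)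

/-- Channel `i` is used by some comparator of the layer `L`. -/
def usedIn {n : ℕ} (L : Layer n) (i : Fin n) : Prop := ∃ c ∈ L, c.1 = i ∨ c.2 = i

/-- Channels `i` and `j` are joined by a comparator of `L`. -/
def Joined {n : ℕ} (L : Layer n) (i j : Fin n) : Prop := (i, j) ∈ L ∨ (j, i) ∈ L

/-- `i` is the smaller channel of some comparator of `L` (a min-channel). -/
def MinChan {n : ℕ} (L : Layer n) (i : Fin n) : Prop := ∃ c ∈ L, c.1 = i

/-- `i` is the larger channel of some comparator of `L` (a max-channel). -/
def MaxChan {n : ℕ} (L : Layer n) (i : Fin n) : Prop := ∃ c ∈ L, c.2 = i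

/-- A two-layer network `[L1, L2]` is redundant if some comparator can be removed
so that the outputs of the result are a permutation of the original outputs. -/
def Redundant {n : ℕ} (L1 L2 : Layer n) : Prop :=
  ∃ π : Equiv.Perm (Fin n),
    (∃ c ∈ L1, outputs [L1.erase c, L2] = permSet π (outputs [L1, L2])) ∨
    (∃ c ∈ L2, outputs [L1, L2.erase c] = permSet π (outputs [L1, L2]))

/-- A two-layer network `[L1, L2]` is saturated if it is non-redundant and no
comparator on two channels unused in the second layer can be added to the second
layer so as to make the output set a proper subset of a permutation of the
original output set. -/
def Saturated {n : ℕ} (L1 L2 : Layer n) : Prop :=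
  ¬ Redundant L1 L2 ∧
  ¬ ∃ (c : Comp n) (π : Equiv.Perm (Fin n)),
      c.1 < c.2 ∧ ¬ usedIn L2 c.1 ∧ ¬ usedIn L2 c.2 ∧
      outputs [L1, insert c L2] ⊂ permSet π (outputs [L1, L2])

/-- Vertices of the graph representation of `C`: the comparators of `C`,
tagged with the index of the layer containing them. -/
def Vertex {n : ℕ} (C : Net n) := {p : ℕ × Comp n // p.2 ∈ C.getD p.1 ∅}

/-- The channel carrying the min output (`b = false`, label 1) or max output
(`b = true`, label 2) of a comparator. -/
def outChan {n : ℕ} (c : Comp n) (b : Bool) : Fin n := if b then c.2 else c.1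

/-- An edge with label `b` (1 for min, 2 for max) from comparator `u` to
comparator `v`: the corresponding output of `u` is an input of `v`, i.e. `v`
is the next comparator on that channel. -/
def Edge {n : ℕ} (C : Net n) (b : Bool) (u v : ℕ × Comp n) : Prop :=
  u.1 < v.1 ∧ (outChan u.2 b = v.2.1 ∨ outChan u.2 b = v.2.2) ∧
  ∀ m, u.1 < m → m < v.1 → ¬ usedIn (C.getD m ∅) (outChan u.2 b)

/-- The graph representations of `C` and `D` are isomorphic: a bijection of
comparators preserving the labeled edges. -/
def GraphIso {n m : ℕ} (C : Net n) (D : Net m) : Prop :=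
  ∃ f : Vertex C ≃ Vertex D,
    ∀ (b : Bool) (u v : Vertex C),
      Edge C b u.val v.val ↔ Edge D b (f u).val (f v).val

/-- The graph representation of `C` is connected. -/
def GraphConnected {n : ℕ} (C : Net n) : Prop :=
  ∀ u v : Vertex C,
    Relation.ReflTransGen
      (fun a b : Vertex C => ∃ ℓ : Bool, Edge C ℓ a.val b.val ∨ Edge C ℓ b.val a.val) u v

/-- Reflection of a comparator: `(i,j) ↦ (n-j+1, n-i+1)` (in 1-based terms). -/
def reflectComp {n : ℕ} (c : Comp n) : Comp n := (c.2.rev, c.1.rev)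

def reflectLayer {n : ℕ} (L : Layer n) : Layer n := L.image reflectComp

/-- Reflection `C^R` of a comparator network. -/
def reflect {n : ℕ} (C : Net n) : Net n := C.map reflectLayer

/-- The first layer `F_n = {(2i-1, 2i) : 1 ≤ i ≤ ⌊n/2⌋}` (0-indexed: `(2i, 2i+1)`). -/
def FLayer (n : ℕ) : Layer n :=
  Finset.univ.filter fun c : Comp n => c.1.val % 2 = 0 ∧ c.2.val = c.1.val + 1

/-- The two-layer networks with first layer `F_n`, parametrized by second layer. -/
def SecondLayers (n : ℕ) := {L : Layer n // IsLayer L}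

/-- The number `|R(G_n)|` of equivalence classes of two-layer networks with
first layer `F_n`, under graph isomorphism `≈`. -/
noncomputable def numClasses (n : ℕ) : ℕ :=
  Nat.card (Quot fun L L' : SecondLayers n =>
    GraphIso ([FLayer n, L.val] : Net n) ([FLayer n, L'.val] : Net n))

/-- Redundant two-layer networks with first layer `F_n`. -/
def RedLayers (n : ℕ) := {L : Layer n // IsLayer L ∧ Redundant (FLayer n) L}

/-- The number of equivalence classes of redundant two-layer networks with
first layer `F_n`, under graph isomorphism `≈`. -/
noncomputable def numRedClasses (n : ℕ) : ℕ :=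
  Nat.card (Quot fun L L' : RedLayers n =>
    GraphIso ([FLayer n, L.val] : Net n) ([FLayer n, L'.val] : Net n))

/-! ### Auxiliary lemmas for untangling -/

section Untangle

variable {n : ℕ}

lemma uniq1 {L : Layer n} (h : NoOverlap L) {c c' : Comp n} (hc : c ∈ L) (hc' : c' ∈ L)
    (h1 : c.1 = c'.1) : c = c' := by
  by_contra hne
  exact (h c hc c' hc' hne).1 h1

lemma uniq2 {L : Layer n} (h : NoOverlap L) {c c' : Comp n} (hc : c ∈ L) (hc' : c' ∈ L)
    (h1 : c.2 = c'.2) : c = c' := by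
  by_contra hne
  exact (h c hc c' hc' hne).2.2.2 h1

lemma uniq_cross {L : Layer n} (hL : IsGenLayer L) {c c' : Comp n} (hc : c ∈ L)
    (hc' : c' ∈ L) : c.1 ≠ c'.2 := by
  rcases eq_or_ne c c' with rfl | hne
  · exact hL.1 c hc
  · exact (hL.2 c hc c' hc' hne).2.1

lemma eval_fst {L : Layer n} (hL : IsGenLayer L) {a b : Fin n} (hab : (a, b) ∈ L)
    (x : Fin n → Bool) : applyLayer L x a = (x a && x b) := by
  have h1 : ∃ c ∈ L, c.1 = a := ⟨(a, b), hab, rfl⟩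
  have hc := h1.choose_spec
  have he : h1.choose = (a, b) := uniq1 hL.2 hc.1 hab hc.2
  have e1 : applyLayer L x a = (x h1.choose.1 && x h1.choose.2) := dif_pos h1
  rw [e1, he]

lemma eval_snd {L : Layer n} (hL : IsGenLayer L) {a b : Fin n} (hab : (a, b) ∈ L)
    (x : Fin n → Bool) : applyLayer L x b = (x a || x b) := by
  have h1 : ¬ ∃ c ∈ L, c.1 = b := by
    rintro ⟨c, hcL, hc1⟩
    exact uniq_cross hL hcL hab hc1
  have h2 : ∃ c ∈ L, c.2 = b := ⟨(a, b), hab, rfl⟩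
  have hc := h2.choose_spec
  have he : h2.choose = (a, b) := uniq2 hL.2 hc.1 hab hc.2
  have e1 : applyLayer L x b =
      (if h2' : ∃ c ∈ L, c.2 = b then x h2'.choose.1 || x h2'.choose.2 else x b) :=
    dif_neg h1
  have e2 : applyLayer L x b = (x h2.choose.1 || x h2.choose.2) := e1.trans (dif_pos h2)
  rw [e2, he]

lemma eval_unused {L : Layer n} (hk : ¬ usedIn L k) (x : Fin n → Bool) :
    applyLayer L x k = x k := by
  have h1 : ¬ ∃ c ∈ L, c.1 = k := fun ⟨c, hcL, hc1⟩ => hk ⟨c, hcL, Or.inl hc1⟩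
  have h2 : ¬ ∃ c ∈ L, c.2 = k := fun ⟨c, hcL, hc2⟩ => hk ⟨c, hcL, Or.inr hc2⟩
  have e1 : applyLayer L x k =
      (if h2' : ∃ c ∈ L, c.2 = k then x h2'.choose.1 || x h2'.choose.2 else x k) :=
    dif_neg h1
  exact e1.trans (dif_neg h2)

lemma isGenLayer_of_isLayer {L : Layer n} (hL : IsLayer L) : IsGenLayer L :=
  ⟨fun c hc => ne_of_lt (hL.1 c hc), hL.2⟩

/-! #### Permuted layers -/

lemma mem_permLayer {L : Layer n} {π : Equiv.Perm (Fin n)} {c' : Comp n} :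
    c' ∈ permLayer π L ↔ ∃ c ∈ L, (π c.1, π c.2) = c' := by
  simp [permLayer, Finset.mem_image]

lemma isGenLayer_permLayer {L : Layer n} (π : Equiv.Perm (Fin n)) (hL : IsGenLayer L) :
    IsGenLayer (permLayer π L) := by
  constructor
  · intro c' hc'
    obtain ⟨c, hc, rfl⟩ := mem_permLayer.1 hc'
    exact fun h => hL.1 c hc (π.injective h)
  · intro c' hc' d' hd' hne
    obtain ⟨c, hc, rfl⟩ := mem_permLayer.1 hc'
    obtain ⟨d, hd, rfl⟩ := mem_permLayer.1 hd'
    have hcd : c ≠ d := by rintro rfl; exact hne rfl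
    have h := hL.2 c hc d hd hcd
    exact ⟨fun h' => h.1 (π.injective h'), fun h' => h.2.1 (π.injective h'),
      fun h' => h.2.2.1 (π.injective h'), fun h' => h.2.2.2 (π.injective h')⟩

lemma usedIn_permLayer {L : Layer n} {π : Equiv.Perm (Fin n)} {k : Fin n}
    (h : usedIn (permLayer π L) (π k)) : usedIn L k := by
  obtain ⟨c', hc', hor⟩ := h
  obtain ⟨c, hc, rfl⟩ := mem_permLayer.1 hc'
  rcases hor with h1 | h2
  · exact ⟨c, hc, Or.inl (π.injective h1)⟩
  · exact ⟨c, hc, Or.inr (π.injective h2)⟩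

lemma permVec_permVec (π τ : Equiv.Perm (Fin n)) (x : Fin n → Bool) :
    permVec π (permVec τ x) = permVec (π * τ) x := by
  funext i
  simp [permVec, Equiv.Perm.mul_def]

lemma permVec_one (x : Fin n → Bool) : permVec 1 x = x := rfl

/-- Pushing a permutation of the input past a generalized layer. -/
lemma applyLayer_permVec {L : Layer n} (hL : IsGenLayer L) (π : Equiv.Perm (Fin n))
    (x : Fin n → Bool) :
    applyLayer L (permVec π x) = permVec π (applyLayer (permLayer π.symm L) x) := by
  have hM : IsGenLayer (permLayer π.symm L) := isGenLayer_permLayer _ hL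
  funext k
  by_cases h1 : ∃ c ∈ L, c.1 = k
  · obtain ⟨c, hc, hc1⟩ := h1
    obtain ⟨a, b⟩ := c
    cases hc1
    dsimp only
    have hmem : (π.symm a, π.symm b) ∈ permLayer π.symm L :=
      mem_permLayer.2 ⟨(a, b), hc, rfl⟩
    rw [eval_fst hL hc]
    show _ = applyLayer (permLayer π.symm L) x (π.symm a)
    rw [eval_fst hM hmem]
    rfl
  · by_cases h2 : ∃ c ∈ L, c.2 = k
    · obtain ⟨c, hc, hc2⟩ := h2
      obtain ⟨a, b⟩ := c
      cases hc2
      dsimp only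
      have hmem : (π.symm a, π.symm b) ∈ permLayer π.symm L :=
        mem_permLayer.2 ⟨(a, b), hc, rfl⟩
      rw [eval_snd hL hc]
      show _ = applyLayer (permLayer π.symm L) x (π.symm b)
      rw [eval_snd hM hmem]
      rfl
    · have hk : ¬ usedIn L k := by
        rintro ⟨c, hc, hor⟩
        rcases hor with h | h
        · exact h1 ⟨c, hc, h⟩
        · exact h2 ⟨c, hc, h⟩
      have hk' : ¬ usedIn (permLayer π.symm L) (π.symm k) := by
        intro h
        exact hk (usedIn_permLayer h)
      rw [eval_unused hk]
      show _ = applyLayer (permLayer π.symm L) x (π.symm k)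
      rw [eval_unused hk']
      rfl

/-! #### Standardization of one generalized layer -/

/-- The standard layer obtained by orienting each comparator upward. -/
def stdLayer (L : Layer n) : Layer n :=
  L.image fun c => if c.1 < c.2 then c else (c.2, c.1)

lemma mem_stdLayer {L : Layer n} {c' : Comp n} :
    c' ∈ stdLayer L ↔ ∃ c ∈ L, (if c.1 < c.2 then c else (c.2, c.1)) = c' := by
  simp [stdLayer, Finset.mem_image]

lemma isLayer_stdLayer {L : Layer n} (hL : IsGenLayer L) : IsLayer (stdLayer L) := by
  constructor
  · intro c' hc'
    obtain ⟨c, hc, rfl⟩ := mem_stdLayer.1 hc'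
    by_cases h : c.1 < c.2
    · simpa [h] using h
    · have : c.2 < c.1 := lt_of_le_of_ne (not_lt.1 h) fun he => hL.1 c hc he.symm
      simpa [h] using this
  · intro c' hc' d' hd' hne
    obtain ⟨c, hc, rfl⟩ := mem_stdLayer.1 hc'
    obtain ⟨d, hd, rfl⟩ := mem_stdLayer.1 hd'
    have hcd : c ≠ d := by rintro rfl; exact hne rfl
    have h := hL.2 c hc d hd hcd
    by_cases h1 : c.1 < c.2 <;> by_cases h2 : d.1 < d.2 <;>
      simp only [if_pos, if_neg, h1, h2, ite_true, ite_false] <;>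
      exact ⟨by tauto, by tauto, by tauto, by tauto⟩

lemma usedIn_stdLayer {L : Layer n} {k : Fin n} (h : usedIn (stdLayer L) k) :
    usedIn L k := by
  obtain ⟨c', hc', hor⟩ := h
  obtain ⟨c, hc, rfl⟩ := mem_stdLayer.1 hc'
  by_cases h1 : c.1 < c.2 <;> simp only [h1, ite_true, ite_false] at hor <;>
    exact ⟨c, hc, by tauto⟩

/-- The swap function associated with the inverted comparators of `L`. -/
noncomputable def swapFun (L : Layer n) (i : Fin n) : Fin n :=
  if h : ∃ c ∈ L, c.2 < c.1 ∧ c.1 = i then h.choose.2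
  else if h' : ∃ c ∈ L, c.2 < c.1 ∧ c.2 = i then h'.choose.1
  else i

lemma swapFun_fst {L : Layer n} (hL : IsGenLayer L) {a b : Fin n} (hab : (a, b) ∈ L)
    (hba : b < a) : swapFun L a = b := by
  have h : ∃ c ∈ L, c.2 < c.1 ∧ c.1 = a := ⟨(a, b), hab, hba, rfl⟩
  have hc := h.choose_spec
  have he : h.choose = (a, b) := uniq1 hL.2 hc.1 hab hc.2.2
  simp only [swapFun, dif_pos h, he]

lemma swapFun_snd {L : Layer n} (hL : IsGenLayer L) {a b : Fin n} (hab : (a, b) ∈ L)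
    (hba : b < a) : swapFun L b = a := by
  have h1 : ¬ ∃ c ∈ L, c.2 < c.1 ∧ c.1 = b := by
    rintro ⟨c, hcL, _, hc1⟩
    exact uniq_cross hL hcL hab hc1
  have h : ∃ c ∈ L, c.2 < c.1 ∧ c.2 = b := ⟨(a, b), hab, hba, rfl⟩
  have hc := h.choose_spec
  have he : h.choose = (a, b) := uniq2 hL.2 hc.1 hab hc.2.2
  simp only [swapFun, dif_neg h1, dif_pos h, he]

lemma swapFun_fst_self {L : Layer n} (hL : IsGenLayer L) {a b : Fin n} (hab : (a, b) ∈ L)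
    (hab' : a < b) : swapFun L a = a := by
  have h1 : ¬ ∃ c ∈ L, c.2 < c.1 ∧ c.1 = a := by
    rintro ⟨c, hcL, hlt, hc1⟩
    have : c = (a, b) := uniq1 hL.2 hcL hab hc1
    rw [this] at hlt
    exact absurd hab' (not_lt.2 hlt.le)
  have h2 : ¬ ∃ c ∈ L, c.2 < c.1 ∧ c.2 = a := by
    rintro ⟨c, hcL, _, hc2⟩
    exact uniq_cross hL hab hcL hc2.symm
  simp only [swapFun, dif_neg h1, dif_neg h2]

lemma swapFun_snd_self {L : Layer n} (hL : IsGenLayer L) {a b : Fin n} (hab : (a, b) ∈ L)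
    (hab' : a < b) : swapFun L b = b := by
  have h1 : ¬ ∃ c ∈ L, c.2 < c.1 ∧ c.1 = b := by
    rintro ⟨c, hcL, _, hc1⟩
    exact uniq_cross hL hcL hab hc1
  have h2 : ¬ ∃ c ∈ L, c.2 < c.1 ∧ c.2 = b := by
    rintro ⟨c, hcL, hlt, hc2⟩
    have : c = (a, b) := uniq2 hL.2 hcL hab hc2
    rw [this] at hlt
    exact absurd hab' (not_lt.2 hlt.le)
  simp only [swapFun, dif_neg h1, dif_neg h2]

lemma swapFun_unused {L : Layer n} {k : Fin n} (hk : ¬ usedIn L k) : swapFun L k = k := by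
  have h1 : ¬ ∃ c ∈ L, c.2 < c.1 ∧ c.1 = k := by
    rintro ⟨c, hcL, _, hc1⟩; exact hk ⟨c, hcL, Or.inl hc1⟩
  have h2 : ¬ ∃ c ∈ L, c.2 < c.1 ∧ c.2 = k := by
    rintro ⟨c, hcL, _, hc2⟩; exact hk ⟨c, hcL, Or.inr hc2⟩
  simp only [swapFun, dif_neg h1, dif_neg h2]

lemma swapFun_involutive {L : Layer n} (hL : IsGenLayer L) :
    Function.Involutive (swapFun L) := by
  intro k
  by_cases hk : usedIn L k
  · obtain ⟨c, hc, hor⟩ := hk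
    obtain ⟨a, b⟩ := c
    have hne : a ≠ b := hL.1 (a, b) hc
    rcases hor with h | h <;> cases h <;> rcases hne.lt_or_gt with hlt | hlt
    · rw [swapFun_fst_self hL hc hlt, swapFun_fst_self hL hc hlt]
    · rw [swapFun_fst hL hc hlt, swapFun_snd hL hc hlt]
    · rw [swapFun_snd_self hL hc hlt, swapFun_snd_self hL hc hlt]
    · rw [swapFun_snd hL hc hlt, swapFun_fst hL hc hlt]
  · rw [swapFun_unused hk, swapFun_unused hk]

/-- The permutation associated with the inverted comparators of `L`. -/
noncomputable def swapPerm {L : Layer n} (hL : IsGenLayer L) : Equiv.Perm (Fin n) :=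
  (swapFun_involutive hL).toPerm

lemma swapPerm_symm_apply {L : Layer n} (hL : IsGenLayer L) (k : Fin n) :
    (swapPerm hL).symm k = swapFun L k := rfl

/-- Standardizing one generalized layer, up to a permutation of the outputs. -/
lemma applyLayer_eq_std {L : Layer n} (hL : IsGenLayer L) (x : Fin n → Bool) :
    applyLayer L x = permVec (swapPerm hL) (applyLayer (stdLayer L) x) := by
  have hS : IsLayer (stdLayer L) := isLayer_stdLayer hL
  have hSG : IsGenLayer (stdLayer L) := isGenLayer_of_isLayer hS
  funext k
  show applyLayer L x k = applyLayer (stdLayer L) x ((swapPerm hL).symm k)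
  rw [swapPerm_symm_apply]
  by_cases h1 : ∃ c ∈ L, c.1 = k
  · obtain ⟨c, hc, hc1⟩ := h1
    obtain ⟨a, b⟩ := c
    cases hc1
    dsimp only
    have hne : a ≠ b := hL.1 (a, b) hc
    rw [eval_fst hL hc]
    rcases hne.lt_or_gt with hlt | hlt
    · have hmem : (a, b) ∈ stdLayer L := mem_stdLayer.2 ⟨(a, b), hc, if_pos hlt⟩
      rw [swapFun_fst_self hL hc hlt, eval_fst hSG hmem]
    · have hmem : (b, a) ∈ stdLayer L :=
        mem_stdLayer.2 ⟨(a, b), hc, if_neg (not_lt.2 hlt.le)⟩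
      rw [swapFun_fst hL hc hlt, eval_fst hSG hmem, Bool.and_comm]
  · by_cases h2 : ∃ c ∈ L, c.2 = k
    · obtain ⟨c, hc, hc2⟩ := h2
      obtain ⟨a, b⟩ := c
      cases hc2
      dsimp only
      have hne : a ≠ b := hL.1 (a, b) hc
      rw [eval_snd hL hc]
      rcases hne.lt_or_gt with hlt | hlt
      · have hmem : (a, b) ∈ stdLayer L := mem_stdLayer.2 ⟨(a, b), hc, if_pos hlt⟩
        rw [swapFun_snd_self hL hc hlt, eval_snd hSG hmem]
      · have hmem : (b, a) ∈ stdLayer L :=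
          mem_stdLayer.2 ⟨(a, b), hc, if_neg (not_lt.2 hlt.le)⟩
        rw [swapFun_snd hL hc hlt, eval_snd hSG hmem, Bool.or_comm]
    · have hk : ¬ usedIn L k := by
        rintro ⟨c, hc, hor⟩
        rcases hor with h | h
        · exact h1 ⟨c, hc, h⟩
        · exact h2 ⟨c, hc, h⟩
      have hk' : ¬ usedIn (stdLayer L) k := fun h => hk (usedIn_stdLayer h)
      rw [eval_unused hk, swapFun_unused hk, eval_unused hk']

/-! #### Running networks -/

lemma run_nil (x : Fin n → Bool) : run ([] : Net n) x = x := rfl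

lemma run_cons (L : Layer n) (C : Net n) (x : Fin n → Bool) :
    run (L :: C) x = run C (applyLayer L x) := rfl

lemma run_append (C D : Net n) (x : Fin n → Bool) :
    run (C ++ D) x = run D (run C x) := by
  simp [run, List.foldl_append]

/-- Main untangling induction: a generalized net preceded by a permutation of
the channels can be replaced by a standard net followed by a permutation. -/
lemma untangle_aux : ∀ (F : Net n), IsGenNet F → ∀ π : Equiv.Perm (Fin n),
    ∃ F' : Net n, ∃ π' : Equiv.Perm (Fin n), IsNet F' ∧ F'.length = F.length ∧
      ∀ x, run F (permVec π x) = permVec π' (run F' x) := by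
  intro F
  induction F with
  | nil =>
    intro _ π
    exact ⟨[], π, fun L hL => absurd hL List.not_mem_nil, rfl, fun x => rfl⟩
  | cons L rest ih =>
    intro hF π
    have hL : IsGenLayer L := hF L (List.mem_cons_self)
    have hrest : IsGenNet rest := fun M hM => hF M (List.mem_cons_of_mem _ hM)
    have hM : IsGenLayer (permLayer π.symm L) := isGenLayer_permLayer _ hL
    obtain ⟨F'', π'', hnet, hlen, hrun⟩ := ih hrest (π * swapPerm hM)
    refine ⟨stdLayer (permLayer π.symm L) :: F'', π'', ?_, by simp [hlen], ?_⟩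
    · intro M hMm
      rcases List.mem_cons.1 hMm with rfl | h
      · exact isLayer_stdLayer hM
      · exact hnet M h
    · intro x
      rw [run_cons, run_cons, applyLayer_permVec hL π, applyLayer_eq_std hM,
        permVec_permVec, hrun]

/-! #### Sorted vectors are fixed points of standard networks -/

lemma applyLayer_sorted {L : Layer n} (hL : IsLayer L) {x : Fin n → Bool}
    (hx : BSorted x) : applyLayer L x = x := by
  have hG : IsGenLayer L := isGenLayer_of_isLayer hL
  funext k
  by_cases h1 : ∃ c ∈ L, c.1 = k
  · obtain ⟨c, hc, hc1⟩ := h1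
    obtain ⟨a, b⟩ := c
    cases hc1
    dsimp only
    have hab : a ≤ b := (hL.1 (a, b) hc).le
    have := hx a b hab
    rw [eval_fst hG hc]
    revert this
    cases x a <;> cases x b <;> simp
  · by_cases h2 : ∃ c ∈ L, c.2 = k
    · obtain ⟨c, hc, hc2⟩ := h2
      obtain ⟨a, b⟩ := c
      cases hc2
      dsimp only
      have hab : a ≤ b := (hL.1 (a, b) hc).le
      have := hx a b hab
      rw [eval_snd hG hc]
      revert this
      cases x a <;> cases x b <;> simp
    · exact eval_unused (fun ⟨c, hc, hor⟩ => hor.elim (fun h => h1 ⟨c, hc, h⟩)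
        (fun h => h2 ⟨c, hc, h⟩)) x

lemma run_sorted : ∀ (C : Net n), IsNet C → ∀ {x : Fin n → Bool}, BSorted x →
    run C x = x := by
  intro C
  induction C with
  | nil => intro _ x _; rfl
  | cons L rest ih =>
    intro hC x hx
    rw [run_cons, applyLayer_sorted (hC L (List.mem_cons_self)) hx]
    exact ih (fun M hM => hC M (List.mem_cons_of_mem _ hM)) hx

/-! #### A monotone permutation of `Fin n` is the identity -/

lemma strictMono_le_apply {f : Fin n → Fin n} (hf : StrictMono f) : ∀ i, i ≤ f i := by
  have key : ∀ k : ℕ, ∀ i : Fin n, i.val = k → i ≤ f i := by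
    intro k
    induction k using Nat.strong_induction_on with
    | _ k ihk =>
      intro i hik
      by_contra h
      push_neg at h
      have h1 : f i ≤ f (f i) := ihk (f i).val (hik ▸ h) (f i) rfl
      exact absurd (hf h) (not_lt.2 h1)
  exact fun i => key i.val i rfl

lemma perm_monotone_eq_one {π : Equiv.Perm (Fin n)} (h : Monotone π) : π = 1 := by
  have hsm : StrictMono π := h.strictMono_of_injective π.injective
  have hsm' : StrictMono (π.symm : Fin n → Fin n) := by
    intro a b hab
    rcases lt_trichotomy (π.symm a) (π.symm b) with h' | h' | h'
    · exact h'
    · exact absurd (congrArg π h') (by simp [hab.ne])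
    · have := hsm h'
      simp only [Equiv.apply_symm_apply] at this
      exact absurd hab (not_lt.2 this.le)
  refine Equiv.ext fun i => ?_
  have h1 := strictMono_le_apply hsm i
  have h2 := strictMono_le_apply hsm' (π i)
  simp only [Equiv.symm_apply_apply] at h2
  exact le_antisymm h2 h1

end Untangle

/-- untangling: if `E` is a comparator network and `F` a
generalized comparator network such that `E;F` sorts all Boolean inputs, then
there is a standard comparator network `F'` of the same depth as `F` such that
`E;F'` is a sorting network. -/
theorem untangling {n : ℕ} (E F : Net n) (hE : IsNet E) (hF : IsGenNet F)
    (hsort : ∀ x : Fin n → Bool, BSorted (run (E ++ F) x)) :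
    ∃ F' : Net n, F'.length = F.length ∧ IsSortingNet (E ++ F') := by
  obtain ⟨F', π', hF'net, hlen, hrun⟩ := untangle_aux F hF 1
  have hEF' : IsNet (E ++ F') := by
    intro L hL
    rcases List.mem_append.1 hL with h | h
    · exact hE L h
    · exact hF'net L h
  have hkey : ∀ x, run (E ++ F) x = permVec π' (run (E ++ F') x) := by
    intro x
    have h := hrun (run E x)
    rw [permVec_one] at h
    rw [run_append, run_append, h]
  have hsortin : ∀ x : Fin n → Bool, BSorted x → BSorted (permVec π' x) := by
    intro x hx
    have h := hsort x
    rwa [hkey x, run_sorted _ hEF' hx] at h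
  have hmono : Monotone (π'.symm : Fin n → Fin n) := by
    intro i i' hii'
    set j := π'.symm i with hj
    have hxs : BSorted (fun t => decide (j ≤ t)) := by
      intro a b hab
      by_cases h : j ≤ a
      · simp [h, le_trans h hab]
      · simp [h]
    have hs := hsortin _ hxs i i' hii'
    simp only [permVec] at hs
    have hti : decide (j ≤ π'.symm i) = true := by simp [hj]
    rw [hti] at hs
    exact of_decide_eq_true (le_antisymm (Bool.le_true _) hs)
  have h1 : π'.symm = 1 := perm_monotone_eq_one hmono
  have hπ : π' = 1 := by
    have := congrArg Equiv.symm h1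
    exact this
  refine ⟨F', hlen, hEF', ?_⟩
  intro x
  have h := hsort x
  rwa [hkey x, hπ, permVec_one] at h

end SN
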